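/- Let {f_k} (k ≥ 1) be an overcomplete frame for a Hilbert space H such that f_k = T^{k-1} f_1 for a bounded operator T : H → H. Then there exists N ∈ ℕ such that for all ℓ ≥ 0, the family {f_k : 1 ≤ k ≤ N} ∪ {f_k : k ≥ N + ℓ + 1} is a frame for H. -/
import Mathlib
open scoped ComplexInnerProductSpace

/-- A sequence `f` in a Hilbert space is a frame if there exist constants
`A, B > 0` with `A‖x‖² ≤ ∑ᵢ |⟨x, f i⟩|² ≤ B‖x‖²` for all `x`. -/
def IsFrame {ι H : Type*} [NormedAddCommGroup H] [InnerProductSpace ℂ H] (f : ι → H) : Prop :=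
  ∃ A B : ℝ, 0 < A ∧ 0 < B ∧ ∀ x : H,
    A * ‖x‖ ^ 2 ≤ ∑' i, ‖⟪x, f i⟫‖ ^ 2 ∧ ∑' i, ‖⟪x, f i⟫‖ ^ 2 ≤ B * ‖x‖ ^ 2

lemma cs_aux (u v : ℕ → ℂ) (t : ℂ) (hu : Summable fun k => ‖u k‖^2)
    (hv : Summable fun k => ‖v k‖^2) (ht : HasSum (fun k => u k * v k) t) :
    ‖t‖^2 ≤ (∑' k, ‖u k‖^2) * (∑' k, ‖v k‖^2) := by
  have hsum : Summable fun k => ‖u k‖ * ‖v k‖ := by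
    apply Summable.of_nonneg_of_le (fun k => by positivity)
      (fun k => ?_) ((hu.add hv).div_const 2)
    nlinarith [sq_nonneg (‖u k‖ - ‖v k‖), norm_nonneg (u k), norm_nonneg (v k)]
  have h1 : ‖t‖ ≤ ∑' k, ‖u k‖ * ‖v k‖ := by
    rw [← ht.tsum_eq]
    calc ‖∑' k, u k * v k‖ ≤ ∑' k, ‖u k * v k‖ :=
          norm_tsum_le_tsum_norm (by simpa [norm_mul] using hsum)
      _ = ∑' k, ‖u k‖ * ‖v k‖ := by simp [norm_mul]
  have hunn : (0:ℝ) ≤ ∑' k, ‖u k‖^2 := tsum_nonneg fun k => by positivity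
  have hvnn : (0:ℝ) ≤ ∑' k, ‖v k‖^2 := tsum_nonneg fun k => by positivity
  have h2 : ∑' k, ‖u k‖ * ‖v k‖ ≤ Real.sqrt (∑' k, ‖u k‖^2) * Real.sqrt (∑' k, ‖v k‖^2) := by
    apply Summable.tsum_le_of_sum_le hsum
    intro s
    have hcs := Finset.sum_mul_sq_le_sq_mul_sq s (fun k => ‖u k‖) (fun k => ‖v k‖)
    have hsu : ∑ k ∈ s, ‖u k‖^2 ≤ ∑' k, ‖u k‖^2 := Summable.sum_le_tsum s (fun k _ => by positivity) hu
    have hsv : ∑ k ∈ s, ‖v k‖^2 ≤ ∑' k, ‖v k‖^2 := Summable.sum_le_tsum s (fun k _ => by positivity) hv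
    have hnn : (0:ℝ) ≤ ∑ k ∈ s, ‖u k‖ * ‖v k‖ := Finset.sum_nonneg fun k _ => by positivity
    have : (∑ k ∈ s, ‖u k‖ * ‖v k‖)^2 ≤ (∑' k, ‖u k‖^2) * (∑' k, ‖v k‖^2) := by
      refine hcs.trans ?_
      exact mul_le_mul hsu hsv (Finset.sum_nonneg fun k _ => by positivity) hunn
    calc ∑ k ∈ s, ‖u k‖ * ‖v k‖ = Real.sqrt ((∑ k ∈ s, ‖u k‖ * ‖v k‖)^2) := (Real.sqrt_sq hnn).symm
      _ ≤ Real.sqrt ((∑' k, ‖u k‖^2) * (∑' k, ‖v k‖^2)) := Real.sqrt_le_sqrt this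
      _ = _ := Real.sqrt_mul hunn _
  have h3 := h1.trans h2
  calc ‖t‖^2 ≤ (Real.sqrt (∑' k, ‖u k‖^2) * Real.sqrt (∑' k, ‖v k‖^2))^2 :=
        pow_le_pow_left₀ (norm_nonneg t) h3 2
    _ = (∑' k, ‖u k‖^2) * (∑' k, ‖v k‖^2) := by
        rw [mul_pow, Real.sq_sqrt hunn, Real.sq_sqrt hvnn]

/-- If `{f_k}` is an overcomplete frame represented as `f_k = T^k f_0` for a bounded `T`,
then there exists `N` such that for every `ℓ`, the subfamily with indices
`k < N` or `k ≥ N + ℓ` is still a frame for `H`. -/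
theorem stmt8 {H : Type*} [NormedAddCommGroup H] [InnerProductSpace ℂ H] [CompleteSpace H]
    (f : ℕ → H) (T : H →L[ℂ] H) (hf : IsFrame f) (hrep : ∀ k, f k = (T ^ k) (f 0))
    (hover : ∃ c : ℕ → ℂ, c ≠ 0 ∧ Summable (fun k => ‖c k‖ ^ 2) ∧
      HasSum (fun k => c k • f k) (0 : H)) :
    ∃ N : ℕ, ∀ ℓ : ℕ, IsFrame (fun k : {k : ℕ // k < N ∨ N + ℓ ≤ k} => f k) := by
  obtain ⟨A, B, hA, hB, hAB⟩ := hf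
  obtain ⟨c, hc0, hcsq, hcsum⟩ := hover
  have hex : ∃ q, c q ≠ 0 := by
    by_contra h; push_neg at h; exact hc0 (funext fun k => h k)
  obtain ⟨p, hcp, hlt⟩ : ∃ p, c p ≠ 0 ∧ ∀ k < p, c k = 0 :=
    ⟨Nat.find hex, Nat.find_spec hex, fun k hk => by
      by_contra h; exact Nat.find_min hex hk h⟩
  set g : H → ℕ → ℝ := fun x k => ‖⟪x, f k⟫‖^2 with hg_def
  have hgnn : ∀ x k, 0 ≤ g x k := fun x k => by positivity
  have hg : ∀ x, Summable (g x) := by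
    intro x
    by_cases hx : x = 0
    · subst hx
      have : g 0 = fun _ => 0 := funext fun k => by simp [hg_def]
      rw [this]; exact summable_zero
    · by_contra h
      have h0 := tsum_eq_zero_of_not_summable h
      have h1 := (hAB x).1
      rw [h0] at h1
      have hxp : 0 < ‖x‖ := norm_pos_iff.mpr hx
      nlinarith [mul_pos hA (pow_pos hxp 2)]
  set S : H → ℕ → ℝ := fun x n => ∑' i, g x (i + n) with hS_def
  have hSsum : ∀ x n, Summable fun i => g x (i + n) :=
    fun x n => (summable_nat_add_iff (f := g x) n).mpr (hg x)
  have hSnn : ∀ x n, 0 ≤ S x n := fun x n => tsum_nonneg fun i => hgnn x _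
  have Srec : ∀ x n, S x n = g x n + S x (n+1) := by
    intro x n
    rw [show S x n = ∑' i, g x (i + n) from rfl, Summable.tsum_eq_zero_add (hSsum x n)]
    congr 1
    · norm_num
    · exact tsum_congr fun i => by rw [show i + 1 + n = i + (n+1) by omega]
  set d : ℕ → ℂ := fun k => -((c p)⁻¹ * c (k + (p+1))) with hd_def
  have hdsq : Summable fun k => ‖d k‖^2 := by
    have h1 : Summable fun k => ‖c (k + (p+1))‖^2 :=
      (summable_nat_add_iff (f := fun k => ‖c k‖^2) (p+1)).mpr hcsq
    have h2 := h1.mul_left (‖(c p)⁻¹‖^2)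
    apply h2.congr
    intro k
    simp [hd_def, norm_mul, mul_pow]
  set K : ℝ := ∑' k, ‖d k‖^2 with hK_def
  have hK0 : 0 ≤ K := tsum_nonneg fun k => by positivity
  have hTf : ∀ m j, (T^m) (f j) = f (j + m) := fun m j => by
    rw [hrep j, ← ContinuousLinearMap.mul_apply, ← pow_add, add_comm m j, ← hrep (j+m)]
  have hz : ∑ i ∈ Finset.range p, c i • f i = 0 :=
    Finset.sum_eq_zero fun i hi => by rw [hlt i (Finset.mem_range.mp hi), zero_smul]
  have hz1 : ∑ i ∈ Finset.range (p+1), c i • f i = c p • f p := by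
    rw [Finset.sum_range_succ, hz, zero_add]
  have h1 : HasSum (fun k => c (k + (p+1)) • f (k + (p+1))) (-(c p • f p)) := by
    rw [hasSum_nat_add_iff (f := fun k => c k • f k) (p+1), hz1, neg_add_cancel]
    exact hcsum
  have hkey : ∀ n, p ≤ n → ∀ x : H, g x n ≤ K * S x (n+1) := by
    intro n hn x
    have h3 := (T^(n-p)).hasSum h1
    simp only [map_neg, map_smul, hTf] at h3
    have e1 : p + (n - p) = n := by omega
    have e2 : ∀ k : ℕ, k + (p+1) + (n-p) = k + (n+1) := by omega
    rw [e1] at h3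
    simp only [e2] at h3
    have h4 : HasSum (fun k => d k • f (k + (n+1))) (f n) := by
      have h5 := h3.const_smul (-(c p)⁻¹ : ℂ)
      simpa [hd_def, smul_smul, neg_smul, smul_neg, neg_neg, neg_mul,
        inv_mul_cancel₀ hcp, one_smul] using h5
    have h6 : HasSum (fun k => d k * ⟪x, f (k+(n+1))⟫) ⟪x, f n⟫ := by
      have h7 := (innerSL ℂ x).hasSum h4
      simpa [inner_smul_right] using h7
    exact cs_aux d (fun k => ⟪x, f (k+(n+1))⟫) _ hdsq (hSsum x (n+1)) h6
  have Sstep : ∀ x n, p ≤ n → S x n ≤ (1+K) * S x (n+1) := by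
    intro x n hn
    have h1 := hkey n hn x
    have h2 := hSnn x (n+1)
    rw [Srec x n]; nlinarith
  have Sdec : ∀ x n, S x (n+1) ≤ S x n := by
    intro x n; rw [Srec x n]; have := hgnn x n; linarith
  have Siter : ∀ x ℓ, S x p ≤ (1+K)^ℓ * S x (p+ℓ) := by
    intro x ℓ
    induction ℓ with
    | zero => simp
    | succ m ih =>
      calc S x p ≤ (1+K)^m * S x (p+m) := ih
        _ ≤ (1+K)^m * ((1+K) * S x (p+m+1)) :=
            mul_le_mul_of_nonneg_left (Sstep x (p+m) (by omega)) (by positivity)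
        _ = (1+K)^(m+1) * S x (p+(m+1)) := by rw [show p+(m+1) = p+m+1 by omega]; ring
  have Smono : ∀ x ℓ, S x (p+ℓ) ≤ S x p := by
    intro x ℓ
    induction ℓ with
    | zero => simp
    | succ m ih =>
      exact le_trans (by rw [show p+(m+1) = p+m+1 by omega]; exact Sdec x (p+m)) ih
  refine ⟨p, fun ℓ => ?_⟩
  have hone : (1:ℝ) ≤ (1+K)^ℓ := one_le_pow₀ (by linarith)
  refine ⟨A / (1+K)^ℓ, B, div_pos hA (by positivity), hB, fun x => ?_⟩
  have hTS : (∑' (k : {k : ℕ // k < p ∨ p + ℓ ≤ k}), g x ↑k)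
      = ∑ k ∈ Finset.range p, g x k + S x (p+ℓ) := by
    have hsub : (∑' (k : {k : ℕ // k < p ∨ p + ℓ ≤ k}), g x ↑k)
        = ∑' k, ({k : ℕ | k < p ∨ p + ℓ ≤ k}).indicator (g x) k := tsum_subtype _ _
    have hind : ∀ k, ({k : ℕ | k < p ∨ p + ℓ ≤ k}).indicator (g x) k
        = ({k : ℕ | k < p}).indicator (g x) k + ({k : ℕ | p + ℓ ≤ k}).indicator (g x) k := by
      intro k
      by_cases h1 : k < p
      · have h2 : ¬ (p + ℓ ≤ k) := by omega
        simp [Set.indicator_apply, h1, h2]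
      · by_cases h2 : p + ℓ ≤ k <;> simp [Set.indicator_apply, h1, h2]
    have e1 : ∑' k, ({k : ℕ | k < p}).indicator (g x) k = ∑ k ∈ Finset.range p, g x k := by
      rw [tsum_eq_sum (s := Finset.range p)
        (fun k hk => Set.indicator_of_notMem (by simpa using hk) _)]
      exact Finset.sum_congr rfl fun k hk => Set.indicator_of_mem (show k ∈ {k : ℕ | k < p} from Finset.mem_range.mp hk) _
    have e2 : ∑' k, ({k : ℕ | p + ℓ ≤ k}).indicator (g x) k = S x (p+ℓ) := by
      have hsum2 : Summable (({k : ℕ | p + ℓ ≤ k}).indicator (g x)) := (hg x).indicator _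
      rw [← Summable.sum_add_tsum_nat_add (p+ℓ) hsum2]
      have z : ∑ i ∈ Finset.range (p+ℓ), ({k : ℕ | p + ℓ ≤ k}).indicator (g x) i = 0 :=
        Finset.sum_eq_zero fun i hi => Set.indicator_of_notMem
          (by have := Finset.mem_range.mp hi; simp only [Set.mem_setOf_eq]; omega) _
      rw [z, zero_add]
      exact tsum_congr fun i => Set.indicator_of_mem
        (show i + (p+ℓ) ∈ {k : ℕ | p+ℓ ≤ k} by simp only [Set.mem_setOf_eq]; omega) _
    rw [hsub, tsum_congr hind, Summable.tsum_add ((hg x).indicator _) ((hg x).indicator _), e1, e2]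
  have tsplit : ∑' k, g x k = ∑ k ∈ Finset.range p, g x k + S x p :=
    (Summable.sum_add_tsum_nat_add p (hg x)).symm
  have hl : A * ‖x‖^2 ≤ ∑' k, g x k := (hAB x).1
  have hub : (∑' k, g x k) ≤ B * ‖x‖^2 := (hAB x).2
  have hrange_nn : 0 ≤ ∑ k ∈ Finset.range p, g x k := Finset.sum_nonneg fun k _ => hgnn x k
  constructor
  · show A / (1+K)^ℓ * ‖x‖^2 ≤ ∑' (k : {k : ℕ // k < p ∨ p + ℓ ≤ k}), g x ↑k
    rw [hTS]
    rw [div_mul_eq_mul_div, div_le_iff₀ (by positivity)]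
    have h1 := Siter x ℓ
    rw [tsplit] at hl
    nlinarith [hSnn x (p+ℓ)]
  · show (∑' (k : {k : ℕ // k < p ∨ p + ℓ ≤ k}), g x ↑k) ≤ B * ‖x‖^2
    rw [hTS]
    rw [tsplit] at hub
    have := Smono x ℓ
    linarith
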